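/- Cost-difference identity for the natural gradient step: if K′ = K − ηE_K with E_K = (R+BᵀP_K B)K − BᵀP_K A and both K, K′ stabilizing, then C(K′) − C(K) = −2η·Tr(Σ_{K′} E_Kᵀ E_K) + η²·Tr[Σ_{K′} E_Kᵀ(R + BᵀP_K B)E_K]. -/

import Mathlib

open Matrix

open Filter

private lemma cpow_entry_tendsto {d : ℕ} (a : Matrix (Fin d) (Fin d) ℂ)
    (ha : spectralRadius ℂ a < 1) (i j : Fin d) :
    Tendsto (fun n : ℕ => ‖(a ^ n) i j‖) atTop (nhds 0) := by
  letI : NormedRing (Matrix (Fin d) (Fin d) ℂ) := Matrix.linftyOpNormedRing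
  letI : NormedAlgebra ℂ (Matrix (Fin d) (Fin d) ℂ) := Matrix.linftyOpNormedAlgebra
  haveI : CompleteSpace (Matrix (Fin d) (Fin d) ℂ) :=
    FiniteDimensional.complete ℂ (Matrix (Fin d) (Fin d) ℂ)
  have hentry : ∀ M : Matrix (Fin d) (Fin d) ℂ, ‖M i j‖₊ ≤ ‖M‖₊ := by
    intro M
    rw [Matrix.linfty_opNNNorm_def]
    exact le_trans (Finset.single_le_sum (f := fun j => ‖M i j‖₊)
      (fun _ _ => zero_le) (Finset.mem_univ j))
      (Finset.le_sup (f := fun i => ∑ j : Fin d, ‖M i j‖₊) (Finset.mem_univ i))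
  have hg := spectrum.pow_nnnorm_pow_one_div_tendsto_nhds_spectralRadius a
  obtain ⟨r, hρr, hr1⟩ := ENNReal.lt_iff_exists_nnreal_btwn.1 ha
  have hev : ∀ᶠ n : ℕ in atTop, ((‖a ^ n‖₊ : ENNReal) ^ (1 / (n:ℝ))) < r :=
    hg.eventually_lt_const hρr
  have hev2 : ∀ᶠ n : ℕ in atTop, ‖(a ^ n) i j‖ ≤ (r:ℝ) ^ n := by
    filter_upwards [hev, eventually_ge_atTop 1] with n hn hn1
    have hne : (n:ℝ) ≠ 0 := by positivity
    have h1 : ((‖a ^ n‖₊ : ENNReal) ^ (1 / (n:ℝ))) ^ (n:ℝ) ≤ ((r:ENNReal)) ^ (n:ℝ) :=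
      ENNReal.rpow_le_rpow hn.le (by positivity)
    rw [← ENNReal.rpow_mul, one_div, inv_mul_cancel₀ hne, ENNReal.rpow_one,
      ENNReal.rpow_natCast, ← ENNReal.coe_pow, ENNReal.coe_le_coe] at h1
    calc ‖(a ^ n) i j‖ ≤ ‖a ^ n‖ := hentry (a ^ n)
      _ ≤ (r:ℝ) ^ n := by exact_mod_cast h1
  have hr1' : (r:ℝ) < 1 := by exact_mod_cast hr1
  exact squeeze_zero_norm' (by simpa using hev2)
    (tendsto_pow_atTop_nhds_zero_of_lt_one r.coe_nonneg hr1')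

private lemma rpow_tendsto {d : ℕ} (G : Matrix (Fin d) (Fin d) ℝ)
    (h : spectralRadius ℂ (G.map (algebraMap ℝ ℂ)) < 1) :
    Tendsto (fun n : ℕ => G ^ n) atTop (nhds 0) := by
  refine tendsto_pi_nhds.2 ?_
  intro i
  rw [tendsto_pi_nhds]
  intro j
  have hmap : ∀ n : ℕ, (G.map (algebraMap ℝ ℂ)) ^ n = (G ^ n).map (algebraMap ℝ ℂ) := by
    intro n
    exact (map_pow ((algebraMap ℝ ℂ).mapMatrix) G n).symm
  have h0 := cpow_entry_tendsto (G.map (algebraMap ℝ ℂ)) h i j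
  simp only [hmap, Matrix.map_apply] at h0
  have h1 : Tendsto (fun n : ℕ => ‖(G ^ n) i j‖) atTop (nhds 0) := by
    simpa [Complex.norm_real] using h0
  simpa using tendsto_zero_iff_norm_tendsto_zero.2 h1

private lemma lyap_unique {d : ℕ} (G D : Matrix (Fin d) (Fin d) ℝ)
    (h : spectralRadius ℂ (G.map (algebraMap ℝ ℂ)) < 1)
    (hD : D = Gᵀ * D * G) : D = 0 := by
  have hn : ∀ n : ℕ, D = (G ^ n)ᵀ * D * (G ^ n) := by
    intro n
    induction n with
    | zero => simp
    | succ n ih =>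
      calc D = (G ^ n)ᵀ * D * (G ^ n) := ih
        _ = (G ^ n)ᵀ * (Gᵀ * D * G) * (G ^ n) := by rw [← hD]
        _ = (G ^ (n+1))ᵀ * D * (G ^ (n+1)) := by
            rw [pow_succ']
            simp [Matrix.transpose_mul, Matrix.mul_assoc]
  have hc : Continuous fun X : Matrix (Fin d) (Fin d) ℝ => Xᵀ * D * X :=
    (continuous_id.matrix_transpose.matrix_mul continuous_const).matrix_mul continuous_id
  have h2 : Tendsto (fun n : ℕ => (G ^ n)ᵀ * D * (G ^ n)) atTop
      (nhds ((0:Matrix (Fin d) (Fin d) ℝ)ᵀ * D * 0)) :=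
    ((hc.tendsto 0).comp (rpow_tendsto G h))
  have h3 : Tendsto (fun _ : ℕ => D) atTop (nhds ((0:Matrix (Fin d) (Fin d) ℝ)ᵀ * D * 0)) := by
    convert h2 using 1
    exact funext fun n => hn n
  have h4 := tendsto_nhds_unique h3 tendsto_const_nhds
  simpa using h4.symm

private lemma step_alg {d k : ℕ}
    (A : Matrix (Fin d) (Fin d) ℝ) (B : Matrix (Fin d) (Fin k) ℝ)
    (K K' E : Matrix (Fin k) (Fin d) ℝ)
    (P : Matrix (Fin d) (Fin d) ℝ) (R : Matrix (Fin k) (Fin k) ℝ) (η : ℝ)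
    (hPs : Pᵀ = P) (hRs : Rᵀ = R)
    (hE : E = (R + Bᵀ * P * B) * K - Bᵀ * P * A)
    (hK' : K' = K - η • E) :
    K'ᵀ * R * K' + (A - B * K')ᵀ * P * (A - B * K')
      - (Kᵀ * R * K + (A - B * K)ᵀ * P * (A - B * K))
    = η ^ 2 • (Eᵀ * (R + Bᵀ * P * B) * E) - (2 * η) • (Eᵀ * E) := by
  subst hE hK'
  simp only [transpose_sub, transpose_add, transpose_mul, transpose_smul, transpose_transpose,
    hPs, hRs]
  simp only [Matrix.sub_mul, Matrix.mul_sub, Matrix.add_mul, Matrix.mul_add, Matrix.smul_mul,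
    Matrix.mul_smul, smul_sub, smul_add, smul_smul, Matrix.mul_assoc]
  module

/-- Cost-difference identity for the natural gradient step `K' = K − ηE_K`:
`C(K') − C(K) = −2η Tr(Σ_{K'}E_KᵀE_K) + η² Tr[Σ_{K'}E_Kᵀ(R + BᵀP_KB)E_K]`. -/
theorem cost_difference_identity
    (d k : ℕ)
    (A : Matrix (Fin d) (Fin d) ℝ) (B : Matrix (Fin d) (Fin k) ℝ)
    (K K' E : Matrix (Fin k) (Fin d) ℝ)
    (Q Φσ : Matrix (Fin d) (Fin d) ℝ) (R : Matrix (Fin k) (Fin k) ℝ)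
    (σ η : ℝ) (hσ : 0 ≤ σ)
    (hQ : Q.PosDef) (hR : R.PosDef) (hΦσ : Φσ.PosDef)
    (P P' S' : Matrix (Fin d) (Fin d) ℝ)
    (hρ : spectralRadius ℂ ((A - B * K).map (algebraMap ℝ ℂ)) < 1)
    (hρ' : spectralRadius ℂ ((A - B * K').map (algebraMap ℝ ℂ)) < 1)
    (hP : P = Q + Kᵀ * R * K + (A - B * K)ᵀ * P * (A - B * K))
    (hP' : P' = Q + K'ᵀ * R * K' + (A - B * K')ᵀ * P' * (A - B * K'))
    (hS' : S' = Φσ + (A - B * K') * S' * (A - B * K')ᵀ)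
    (hE : E = (R + Bᵀ * P * B) * K - Bᵀ * P * A)
    (hK' : K' = K - η • E) :
    ((P' * Φσ).trace + σ ^ 2 * R.trace) - ((P * Φσ).trace + σ ^ 2 * R.trace)
      = -2 * η * (S' * Eᵀ * E).trace
        + η ^ 2 * (S' * Eᵀ * (R + Bᵀ * P * B) * E).trace := by
  have hQs : Qᵀ = Q := by
    have h := hQ.1
    rwa [Matrix.IsHermitian, Matrix.conjTranspose_eq_transpose_of_trivial] at h
  have hRs : Rᵀ = R := by
    have h := hR.1
    rwa [Matrix.IsHermitian, Matrix.conjTranspose_eq_transpose_of_trivial] at h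
  set G := A - B * K with hG
  set F := A - B * K' with hF
  -- symmetry of P
  have hPT : Pᵀ = Q + Kᵀ * R * K + Gᵀ * Pᵀ * G := by
    conv_lhs => rw [hP]
    simp [transpose_add, transpose_mul, transpose_transpose, hQs, hRs, Matrix.mul_assoc]
  have hDeq : Pᵀ - P = Gᵀ * (Pᵀ - P) * G := by
    calc Pᵀ - P = (Q + Kᵀ * R * K + Gᵀ * Pᵀ * G) - (Q + Kᵀ * R * K + Gᵀ * P * G) := by
          rw [← hPT, ← hP]
      _ = Gᵀ * (Pᵀ - P) * G := by
          simp only [Matrix.mul_sub, Matrix.sub_mul]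
          abel
  have hPs : Pᵀ = P := by
    have h0 := lyap_unique G (Pᵀ - P) hρ hDeq
    have := sub_eq_zero.mp h0
    exact this
  -- key matrix identity
  have halg := step_alg A B K K' E P R η hPs hRs hE hK'
  have key : P' - P
      = Fᵀ * (P' - P) * F
        + (η ^ 2 • (Eᵀ * (R + Bᵀ * P * B) * E) - (2 * η) • (Eᵀ * E)) := by
    calc P' - P
        = (Q + K'ᵀ * R * K' + Fᵀ * P' * F) - (Q + Kᵀ * R * K + Gᵀ * P * G) := by
          rw [← hP', ← hP]
      _ = (Fᵀ * P' * F - Fᵀ * P * F)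
            + (K'ᵀ * R * K' + Fᵀ * P * F - (Kᵀ * R * K + Gᵀ * P * G)) := by abel
      _ = Fᵀ * (P' - P) * F
            + (η ^ 2 • (Eᵀ * (R + Bᵀ * P * B) * E) - (2 * η) • (Eᵀ * E)) := by
          rw [halg]
          simp only [Matrix.mul_sub, Matrix.sub_mul]
  -- trace manipulation
  have hΦ : Φσ = S' - F * S' * Fᵀ := by
    rw [eq_sub_iff_add_eq]
    conv_rhs => rw [hS']
  have hcyc : ((P' - P) * (F * S' * Fᵀ)).trace = ((Fᵀ * (P' - P) * F) * S').trace := by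
    rw [show (P' - P) * (F * S' * Fᵀ) = ((P' - P) * F * S') * Fᵀ by
      simp [Matrix.mul_assoc]]
    rw [Matrix.trace_mul_comm]
    simp [Matrix.mul_assoc]
  have hsub : P' - P - Fᵀ * (P' - P) * F
      = η ^ 2 • (Eᵀ * (R + Bᵀ * P * B) * E) - (2 * η) • (Eᵀ * E) := by
    rw [sub_eq_iff_eq_add]
    conv_lhs => rw [key]
    exact add_comm _ _
  have htr : ((P' - P) * Φσ).trace
      = -2 * η * (S' * Eᵀ * E).trace + η ^ 2 * (S' * Eᵀ * (R + Bᵀ * P * B) * E).trace := by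
    rw [hΦ, Matrix.mul_sub, Matrix.trace_sub, hcyc]
    have : ((P' - P) * S').trace - ((Fᵀ * (P' - P) * F) * S').trace
        = ((P' - P - Fᵀ * (P' - P) * F) * S').trace := by
      simp only [Matrix.sub_mul, Matrix.trace_sub]
    rw [this, hsub]
    rw [Matrix.sub_mul, Matrix.trace_sub, Matrix.smul_mul, Matrix.smul_mul,
      Matrix.trace_smul, Matrix.trace_smul, Matrix.trace_mul_comm (Eᵀ * (R + Bᵀ * P * B) * E) S',
      Matrix.trace_mul_comm (Eᵀ * E) S']
    simp only [smul_eq_mul, Matrix.mul_assoc]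
    ring
  calc ((P' * Φσ).trace + σ ^ 2 * R.trace) - ((P * Φσ).trace + σ ^ 2 * R.trace)
      = ((P' - P) * Φσ).trace := by
        rw [Matrix.sub_mul, Matrix.trace_sub]; ring
    _ = -2 * η * (S' * Eᵀ * E).trace + η ^ 2 * (S' * Eᵀ * (R + Bᵀ * P * B) * E).trace := htr
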